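/- Let S be a nonempty compact subset of ℝ^D, P a Borel probability measure on S, and ε > 0. Let (X_i)_{i≥1} be i.i.d. random variables with distribution P. Fix an index k ≥ 1 and a Borel function f : S → ℝ with ∫_S f² dP < ∞. For N ≥ k define q_N(x) = Σ_{j=1}^N k_ε(x, X_j) and A^N_{k,i} = [k_ε(X_k, X_i)/q_N(X_i)] / (Σ_{j=1}^N k_ε(X_k, X_j)/q_N(X_j)) for 1 ≤ i ≤ N. Then almost surely, Σ_{i=1}^N A^N_{k,i} f(X_i) converges to T_ε f(X_k) as N → ∞. -/

import Mathlib

open MeasureTheory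

noncomputable section

/-- The Gaussian-like kernel `k_ε(x,y) = exp(-‖x-y‖²/(4ε²))`. -/
def gaussKer {D : ℕ} (ε : ℝ) (x y : EuclideanSpace ℝ (Fin D)) : ℝ :=
  Real.exp (-‖x - y‖ ^ 2 / (4 * ε ^ 2))

/-- The degree function `d_ε(x) = ∫ k_ε(x,x') dP(x')`. -/
def degFun {D : ℕ} (ε : ℝ) (μ : Measure (EuclideanSpace ℝ (Fin D)))
    (x : EuclideanSpace ℝ (Fin D)) : ℝ :=
  ∫ y, gaussKer ε x y ∂μ

/-- The normalized kernel `Q_ε(x,x') = k_ε(x,x')/(d_ε(x) d_ε(x'))`. -/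
def Qker {D : ℕ} (ε : ℝ) (μ : Measure (EuclideanSpace ℝ (Fin D)))
    (x y : EuclideanSpace ℝ (Fin D)) : ℝ :=
  gaussKer ε x y / (degFun ε μ x * degFun ε μ y)

/-- The normalization `m_ε(x) = ∫ Q_ε(x,x') dP(x')`. -/
def mFun {D : ℕ} (ε : ℝ) (μ : Measure (EuclideanSpace ℝ (Fin D)))
    (x : EuclideanSpace ℝ (Fin D)) : ℝ :=
  ∫ y, Qker ε μ x y ∂μ

/-- The operator `T_ε f(x) = (∫ Q_ε(x,x') f(x') dP(x')) / m_ε(x)`. -/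
def Tfun {D : ℕ} (ε : ℝ) (μ : Measure (EuclideanSpace ℝ (Fin D)))
    (f : EuclideanSpace ℝ (Fin D) → ℝ) (x : EuclideanSpace ℝ (Fin D)) : ℝ :=
  (∫ y, Qker ε μ x y * f y ∂μ) / mFun ε μ x


open Filter Topology

section Helpers
variable {D : ℕ} {Ω : Type*} [MeasurableSpace Ω]


lemma gaussKer_pos (ε : ℝ) (x y : EuclideanSpace ℝ (Fin D)) : 0 < gaussKer ε x y :=
  Real.exp_pos _

lemma gaussKer_le_one (ε : ℝ) (x y : EuclideanSpace ℝ (Fin D)) : gaussKer ε x y ≤ 1 := by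
  unfold gaussKer
  rw [← Real.exp_zero]
  apply Real.exp_le_exp.mpr
  apply div_nonpos_of_nonpos_of_nonneg
  · simpa using sq_nonneg ‖x - y‖
  · positivity

lemma gaussKer_self (ε : ℝ) (x : EuclideanSpace ℝ (Fin D)) : gaussKer ε x x = 1 := by
  simp [gaussKer]

lemma gaussKer_continuous (ε : ℝ) (x : EuclideanSpace ℝ (Fin D)) :
    Continuous (fun y => gaussKer ε x y) := by
  unfold gaussKer; fun_prop

lemma gaussKer_measurable (ε : ℝ) (x : EuclideanSpace ℝ (Fin D)) :
    Measurable (fun y => gaussKer ε x y) := (gaussKer_continuous ε x).measurable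

lemma exp_neg_lip {a b : ℝ} (ha : 0 ≤ a) (hb : 0 ≤ b) :
    |Real.exp (-a) - Real.exp (-b)| ≤ |a - b| := by
  wlog h : b ≤ a generalizing a b
  · rw [abs_sub_comm, abs_sub_comm a b]; exact this hb ha (le_of_not_ge h)
  rw [abs_of_nonpos (by simp [Real.exp_le_exp]; linarith), abs_of_nonneg (by linarith)]
  have h1 : Real.exp (-b) ≤ 1 := Real.exp_le_one_iff.mpr (by linarith)
  have h2 : Real.exp (-a) ≥ Real.exp (-b) * (1 - (a - b)) := by
    have := Real.add_one_le_exp (-(a - b))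
    calc Real.exp (-b) * (1 - (a-b)) ≤ Real.exp (-b) * Real.exp (-(a-b)) := by
          apply mul_le_mul_of_nonneg_left _ (Real.exp_pos _).le
          linarith
      _ = Real.exp (-a) := by rw [← Real.exp_add]; ring_nf
  nlinarith [Real.exp_pos (-b)]

lemma gaussKer_lip {ε M : ℝ} (hε : 0 < ε) (hM : 0 < M)
    {x x' y : EuclideanSpace ℝ (Fin D)}
    (hx : ‖x‖ ≤ M) (hx' : ‖x'‖ ≤ M) (hy : ‖y‖ ≤ M) :
    |gaussKer ε x y - gaussKer ε x' y| ≤ (M / ε ^ 2) * ‖x - x'‖ := by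
  unfold gaussKer
  have e1 : -‖x - y‖ ^ 2 / (4 * ε ^ 2) = -(‖x - y‖ ^ 2 / (4 * ε ^ 2)) := by ring
  have e2 : -‖x' - y‖ ^ 2 / (4 * ε ^ 2) = -(‖x' - y‖ ^ 2 / (4 * ε ^ 2)) := by ring
  rw [e1, e2]
  refine le_trans (exp_neg_lip (by positivity) (by positivity)) ?_
  have habs : |4 * ε ^ 2| = 4 * ε ^ 2 := abs_of_pos (by positivity)
  rw [div_sub_div_same, abs_div, habs, div_le_iff₀ (by positivity)]
  have h1 : |‖x - y‖ - ‖x' - y‖| ≤ ‖x - x'‖ := by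
    have := abs_norm_sub_norm_le (x - y) (x' - y)
    simpa [sub_sub_sub_cancel_right] using this
  have h2 : ‖x - y‖ + ‖x' - y‖ ≤ 4 * M := by
    have := norm_sub_le x y
    have := norm_sub_le x' y
    linarith
  have h3 : |‖x - y‖ ^ 2 - ‖x' - y‖ ^ 2| = |‖x - y‖ - ‖x' - y‖| * (‖x - y‖ + ‖x' - y‖) := by
    rw [← abs_of_nonneg (by positivity : (0:ℝ) ≤ ‖x - y‖ + ‖x' - y‖), ← abs_mul]
    ring_nf
  rw [h3]
  calc |‖x - y‖ - ‖x' - y‖| * (‖x - y‖ + ‖x' - y‖) ≤ ‖x - x'‖ * (4 * M) := by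
        apply mul_le_mul h1 h2 (by positivity) (norm_nonneg _)
    _ = M / ε ^ 2 * ‖x - x'‖ * (4 * ε ^ 2) := by field_simp



variable {D : ℕ} {Ω : Type*} [MeasurableSpace Ω]

lemma slln_comp (μ : Measure (EuclideanSpace ℝ (Fin D)))
    (P : Measure Ω)
    (X : ℕ → Ω → EuclideanSpace ℝ (Fin D))
    (hXmeas : ∀ i, Measurable (X i))
    (hXdist : ∀ i, Measure.map (X i) P = μ)
    (hXindep : ProbabilityTheory.iIndepFun X P)
    (φ : EuclideanSpace ℝ (Fin D) → ℝ) (hφ : Measurable φ) (hφi : Integrable φ μ) :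
    ∀ᵐ ω ∂P, Tendsto (fun n : ℕ => (∑ i ∈ Finset.range n, φ (X i ω)) / n) atTop
      (𝓝 (∫ y, φ y ∂μ)) := by
  have hident : ∀ i, ProbabilityTheory.IdentDistrib (fun ω => φ (X i ω)) (fun ω => φ (X 0 ω)) P P := by
    intro i
    have h0 : ProbabilityTheory.IdentDistrib (X i) (X 0) P P :=
      ⟨(hXmeas i).aemeasurable, (hXmeas 0).aemeasurable, by rw [hXdist i, hXdist 0]⟩
    exact h0.comp hφ
  have hindep : Pairwise (Function.onFun (fun f g => ProbabilityTheory.IndepFun f g P) fun i ω => φ (X i ω)) := by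
    intro i j hij
    exact (hXindep.indepFun hij).comp hφ hφ
  have hint : Integrable (fun ω => φ (X 0 ω)) P := by
    have : AEStronglyMeasurable φ (Measure.map (X 0) P) := by
      rw [hXdist 0]; exact hφ.aestronglyMeasurable
    have h2 := (integrable_map_measure this (hXmeas 0).aemeasurable).mp
    rw [hXdist 0] at h2
    exact h2 hφi
  have hlim : ∫ ω, φ (X 0 ω) ∂P = ∫ y, φ y ∂μ := by
    rw [← hXdist 0, integral_map (hXmeas 0).aemeasurable]
    rw [hXdist 0]; exact hφ.aestronglyMeasurable
  have := ProbabilityTheory.strong_law_ae_real (fun i ω => φ (X i ω)) hint hindep hident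
  simpa [hlim] using this

lemma ae_mem_S (μ : Measure (EuclideanSpace ℝ (Fin D))) {S : Set (EuclideanSpace ℝ (Fin D))}
    (hμS : μ Sᶜ = 0) : ∀ᵐ y ∂μ, y ∈ S := by
  rw [ae_iff]; simpa [Set.compl_def] using hμS

lemma integrable_ker_mul (μ : Measure (EuclideanSpace ℝ (Fin D))) [IsProbabilityMeasure μ]
    (ε : ℝ) (x : EuclideanSpace ℝ (Fin D)) {g : EuclideanSpace ℝ (Fin D) → ℝ}
    (hg : Measurable g) (hgi : Integrable g μ) :
    Integrable (fun y => gaussKer ε x y * g y) μ := by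
  apply hgi.abs.mono' (((gaussKer_measurable ε x).mul hg).aestronglyMeasurable)
  filter_upwards with y
  rw [Real.norm_eq_abs, Pi.mul_apply, abs_mul]
  calc |gaussKer ε x y| * |g y| ≤ 1 * |g y| := by
        apply mul_le_mul_of_nonneg_right _ (abs_nonneg _)
        rw [abs_of_pos (gaussKer_pos ε x y)]; exact gaussKer_le_one ε x y
    _ = |g y| := one_mul _

lemma ulln (μ : Measure (EuclideanSpace ℝ (Fin D))) [IsProbabilityMeasure μ]
    {S : Set (EuclideanSpace ℝ (Fin D))} (hS : IsCompact S) (hμS : μ Sᶜ = 0)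
    {ε M : ℝ} (hε : 0 < ε) (hM : 0 < M) (hSM : S ⊆ Metric.closedBall 0 M)
    (P : Measure Ω) [IsProbabilityMeasure P]
    (X : ℕ → Ω → EuclideanSpace ℝ (Fin D))
    (hXmeas : ∀ i, Measurable (X i))
    (hXdist : ∀ i, Measure.map (X i) P = μ)
    (hXindep : ProbabilityTheory.iIndepFun X P)
    (g : EuclideanSpace ℝ (Fin D) → ℝ) (hg : Measurable g) (hgi : Integrable g μ) :
    ∀ᵐ ω ∂P, ∀ η : ℝ, 0 < η → ∀ᶠ N : ℕ in atTop, ∀ x ∈ S,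
      |(∑ j ∈ Finset.range N, gaussKer ε x (X j ω) * g (X j ω)) / N
        - ∫ y, gaussKer ε x y * g y ∂μ| ≤ η := by
  classical
  set L : ℝ := M / ε ^ 2 with hL
  have hLpos : 0 < L := by positivity
  set I : ℝ := (∫ y, |g y| ∂μ) + 1 with hI
  have hIpos : 0 < I := by
    have : 0 ≤ ∫ y, |g y| ∂μ := integral_nonneg fun y => abs_nonneg _
    linarith
  set F : EuclideanSpace ℝ (Fin D) → ℝ := fun x => ∫ y, gaussKer ε x y * g y ∂μ with hF
  have hnormM : ∀ z ∈ S, ‖z‖ ≤ M := by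
    intro z hz
    simpa using Metric.mem_closedBall.mp (hSM hz)
  -- Lipschitz bound for F
  have hFlip : ∀ x ∈ S, ∀ x' ∈ S, |F x - F x'| ≤ L * ‖x - x'‖ * ∫ y, |g y| ∂μ := by
    intro x hx x' hx'
    have hint1 := integrable_ker_mul μ ε x hg hgi
    have hint2 := integrable_ker_mul μ ε x' hg hgi
    rw [hF]
    rw [← integral_sub hint1 hint2]
    have habs : |∫ y, (gaussKer ε x y * g y - gaussKer ε x' y * g y) ∂μ|
        ≤ ∫ y, |gaussKer ε x y * g y - gaussKer ε x' y * g y| ∂μ := by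
      simpa [Real.norm_eq_abs] using
        norm_integral_le_integral_norm (fun y => gaussKer ε x y * g y - gaussKer ε x' y * g y)
    refine habs.trans ?_
    have : ∫ y, |gaussKer ε x y * g y - gaussKer ε x' y * g y| ∂μ
        ≤ ∫ y, L * ‖x - x'‖ * |g y| ∂μ := by
      apply integral_mono_ae (hint1.sub hint2).abs (hgi.abs.const_mul _)
      filter_upwards [ae_mem_S μ hμS] with y hy
      simp only [Pi.sub_apply]
      rw [← sub_mul, abs_mul]
      exact mul_le_mul_of_nonneg_right
        (gaussKer_lip hε hM (hnormM x hx) (hnormM x' hx') (hnormM y hy)) (abs_nonneg _)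
    refine this.trans ?_
    rw [integral_const_mul]
  -- nets
  have hδpos : ∀ m : ℕ, 0 < ((1:ℝ)/(m+1)) / (3 * L * I) := by
    intro m; positivity
  have hnet : ∀ m : ℕ, ∃ T : Finset S,
      S ⊆ ⋃ t ∈ T, Metric.ball (t : EuclideanSpace ℝ (Fin D)) (((1:ℝ)/(m+1)) / (3 * L * I)) := by
    intro m
    apply hS.elim_finite_subcover
      (fun t : S => Metric.ball (t : EuclideanSpace ℝ (Fin D)) (((1:ℝ)/(m+1)) / (3 * L * I)))
      (fun _ => Metric.isOpen_ball)
    intro x hx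
    exact Set.mem_iUnion.mpr ⟨⟨x, hx⟩, Metric.mem_ball_self (hδpos m)⟩
  choose T hT using hnet
  -- a.e. events
  have hA := slln_comp μ P X hXmeas hXdist hXindep (fun y => |g y|) hg.abs hgi.abs
  have hE : ∀ᵐ ω ∂P, ∀ m : ℕ, ∀ t ∈ (T m : Set S),
      Tendsto (fun N : ℕ => (∑ j ∈ Finset.range N,
        gaussKer ε (t : EuclideanSpace ℝ (Fin D)) (X j ω) * g (X j ω)) / N) atTop
        (𝓝 (F (t : EuclideanSpace ℝ (Fin D)))) := by
    rw [ae_all_iff]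
    intro m
    rw [ae_ball_iff (T m).countable_toSet]
    intro t ht
    exact slln_comp μ P X hXmeas hXdist hXindep
      (fun y => gaussKer ε (t : EuclideanSpace ℝ (Fin D)) y * g y)
      ((gaussKer_measurable ε _).mul hg) (integrable_ker_mul μ ε _ hg hgi)
  have hSae : ∀ᵐ ω ∂P, ∀ i, X i ω ∈ S := by
    rw [ae_all_iff]
    intro i
    have hmeas : MeasurableSet Sᶜ := (hS.isClosed.measurableSet).compl
    have : P (X i ⁻¹' Sᶜ) = 0 := by
      rw [← Measure.map_apply (hXmeas i) hmeas, hXdist i]; exact hμS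
    simpa [ae_iff, Set.preimage, Set.compl_def] using this
  filter_upwards [hA, hE, hSae] with ω hAω hEω hSω
  intro η hη
  obtain ⟨m, hm⟩ := exists_nat_one_div_lt hη
  set η' : ℝ := (1:ℝ)/(m+1) with hη'def
  have hη'pos : 0 < η' := by positivity
  set δ : ℝ := η' / (3 * L * I) with hδdef
  have hmδ : δ = ((1:ℝ)/(m+1)) / (3 * L * I) := by rw [hδdef, hη'def]
  have ev1 : ∀ᶠ N : ℕ in atTop, ∀ t ∈ T m,
      |(∑ j ∈ Finset.range N,
        gaussKer ε (t : EuclideanSpace ℝ (Fin D)) (X j ω) * g (X j ω)) / N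
        - F (t : EuclideanSpace ℝ (Fin D))| ≤ η' / 3 := by
    rw [Filter.eventually_all_finset]
    intro t ht
    have h0 := hEω m t (by simpa using ht)
    obtain ⟨N₀, hN₀⟩ := Metric.tendsto_atTop.mp h0 (η'/3) (by positivity)
    filter_upwards [eventually_ge_atTop N₀] with N hN
    have := hN₀ N hN
    rw [Real.dist_eq] at this
    exact this.le
  have ev2 : ∀ᶠ N : ℕ in atTop,
      (∑ j ∈ Finset.range N, |g (X j ω)|) / N ≤ I := by
    obtain ⟨N₀, hN₀⟩ := Metric.tendsto_atTop.mp hAω 1 one_pos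
    filter_upwards [eventually_ge_atTop N₀] with N hN
    have h5 := hN₀ N hN
    rw [Real.dist_eq] at h5
    have h6 := abs_lt.mp h5
    rw [hI]; linarith [h6.2]
  filter_upwards [ev1, ev2, eventually_ge_atTop 1] with N h1 h2 hN1
  intro x hx
  obtain ⟨t, ht, hxt⟩ := Set.mem_iUnion₂.mp (hT m hx)
  rw [← hmδ] at hxt
  have hdist : ‖x - (t : EuclideanSpace ℝ (Fin D))‖ ≤ δ := by
    rw [← dist_eq_norm]; exact (Metric.mem_ball.mp hxt).le
  have hNpos : (0:ℝ) < N := by exact_mod_cast hN1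
  -- empirical Lipschitz
  have hemp : |(∑ j ∈ Finset.range N, gaussKer ε x (X j ω) * g (X j ω)) / N
      - (∑ j ∈ Finset.range N,
          gaussKer ε (t : EuclideanSpace ℝ (Fin D)) (X j ω) * g (X j ω)) / N|
      ≤ L * δ * I := by
    rw [div_sub_div_same, ← Finset.sum_sub_distrib]
    rw [abs_div, abs_of_pos hNpos]
    rw [div_le_iff₀ hNpos]
    calc |∑ j ∈ Finset.range N,
          (gaussKer ε x (X j ω) * g (X j ω)
            - gaussKer ε (t : EuclideanSpace ℝ (Fin D)) (X j ω) * g (X j ω))|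
        ≤ ∑ j ∈ Finset.range N,
          |gaussKer ε x (X j ω) * g (X j ω)
            - gaussKer ε (t : EuclideanSpace ℝ (Fin D)) (X j ω) * g (X j ω)| :=
          Finset.abs_sum_le_sum_abs _ _
      _ ≤ ∑ j ∈ Finset.range N, L * δ * |g (X j ω)| := by
          apply Finset.sum_le_sum
          intro j _
          rw [← sub_mul, abs_mul]
          have hk := gaussKer_lip hε hM (hnormM x hx)
            (hnormM _ t.2) (hnormM _ (hSω j))
          have : |gaussKer ε x (X j ω)
              - gaussKer ε (t : EuclideanSpace ℝ (Fin D)) (X j ω)| ≤ L * δ := by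
            refine hk.trans ?_
            rw [← hL]
            exact mul_le_mul_of_nonneg_left hdist hLpos.le
          exact mul_le_mul_of_nonneg_right this (abs_nonneg _)
      _ = L * δ * ∑ j ∈ Finset.range N, |g (X j ω)| := by rw [Finset.mul_sum]
      _ ≤ L * δ * I * N := by
          have hsum : ∑ j ∈ Finset.range N, |g (X j ω)| ≤ I * N := by
            have := h2
            rw [div_le_iff₀ hNpos] at this
            linarith
          calc L * δ * ∑ j ∈ Finset.range N, |g (X j ω)| ≤ L * δ * (I * N) :=
                mul_le_mul_of_nonneg_left hsum (by positivity)
            _ = L * δ * I * N := by ring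
  have hFbound : |F x - F (t : EuclideanSpace ℝ (Fin D))| ≤ L * δ * I := by
    refine (hFlip x hx _ t.2).trans ?_
    have h1' : L * ‖x - (t : EuclideanSpace ℝ (Fin D))‖ ≤ L * δ :=
      mul_le_mul_of_nonneg_left hdist hLpos.le
    have h2' : (∫ y, |g y| ∂μ) ≤ I := by rw [hI]; linarith
    exact mul_le_mul h1' h2' (integral_nonneg fun y => abs_nonneg _) (by positivity)
  have hLδI : L * δ * I = η' / 3 := by
    rw [hδdef]; field_simp
  have htt := h1 t ht
  have key : |(∑ j ∈ Finset.range N, gaussKer ε x (X j ω) * g (X j ω)) / N - F x|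
      ≤ η' := by
    have := abs_sub_le
      ((∑ j ∈ Finset.range N, gaussKer ε x (X j ω) * g (X j ω)) / N)
      ((∑ j ∈ Finset.range N,
          gaussKer ε (t : EuclideanSpace ℝ (Fin D)) (X j ω) * g (X j ω)) / N)
      (F x)
    have h4 := abs_sub_le
      ((∑ j ∈ Finset.range N,
          gaussKer ε (t : EuclideanSpace ℝ (Fin D)) (X j ω) * g (X j ω)) / N)
      (F (t : EuclideanSpace ℝ (Fin D))) (F x)
    rw [hLδI] at hemp hFbound
    have hFb2 : |F (t : EuclideanSpace ℝ (Fin D)) - F x| ≤ η' / 3 := by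
      rw [abs_sub_comm]; exact hFbound
    linarith
  exact key.trans (by linarith)

lemma det_tendsto {D : ℕ} {S : Set (EuclideanSpace ℝ (Fin D))} {ε c : ℝ} (hc : 0 < c)
    (d F : EuclideanSpace ℝ (Fin D) → ℝ) (hd : ∀ z ∈ S, c ≤ d z)
    (y : ℕ → EuclideanSpace ℝ (Fin D)) (hy : ∀ i, y i ∈ S)
    (x : EuclideanSpace ℝ (Fin D)) (hx : x ∈ S)
    (g : EuclideanSpace ℝ (Fin D) → ℝ) (C : ℝ)
    (hq : ∀ η : ℝ, 0 < η → ∀ᶠ N : ℕ in atTop, ∀ z ∈ S,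
      |(∑ j ∈ Finset.range N, gaussKer ε z (y j)) / N - d z| ≤ η)
    (hU : ∀ η : ℝ, 0 < η → ∀ᶠ N : ℕ in atTop, ∀ z ∈ S,
      |(∑ j ∈ Finset.range N, gaussKer ε z (y j) * g (y j)) / N - F z| ≤ η)
    (hA : Tendsto (fun N : ℕ => (∑ j ∈ Finset.range N, |g (y j)|) / N) atTop (𝓝 C)) :
    Tendsto (fun N : ℕ => ∑ i ∈ Finset.range N,
      gaussKer ε x (y i) * (g (y i) * d (y i)) /
        (∑ j ∈ Finset.range N, gaussKer ε (y i) (y j)))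
      atTop (𝓝 (F x)) := by
  have hC : 0 ≤ C := by
    apply ge_of_tendsto hA
    filter_upwards with N
    positivity
  rw [Metric.tendsto_atTop]
  intro η₀ hη₀
  set K : ℝ := 1 + 2 * (C + 1) / c with hK
  have hKpos : 0 < K := by positivity
  set η : ℝ := min (c / 2) (η₀ / (2 * K)) with hηdef
  have hηpos : 0 < η := lt_min (by positivity) (by positivity)
  have hηc : η ≤ c / 2 := min_le_left _ _
  have hηK : η * K ≤ η₀ / 2 := by
    have := min_le_right (c/2) (η₀ / (2 * K))
    calc η * K ≤ (η₀ / (2 * K)) * K := mul_le_mul_of_nonneg_right this hKpos.le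
      _ = η₀ / 2 := by field_simp
  have hcomb := ((hq η hηpos).and ((hU η hηpos).and
    ((hA.eventually (Metric.ball_mem_nhds C one_pos : Metric.ball C 1 ∈ 𝓝 C)).and
      (eventually_ge_atTop 1)))).exists_forall_of_atTop
  obtain ⟨N₀, hN₀⟩ := hcomb
  refine ⟨N₀, fun n hn => ?_⟩
  obtain ⟨Hq, HU', HAb, HN1⟩ := hN₀ n hn
  rw [Real.dist_eq]
  have hNpos : (0:ℝ) < n := by exact_mod_cast HN1
  have hNne : (n:ℝ) ≠ 0 := hNpos.ne'
  set A : ℝ := (∑ j ∈ Finset.range n, |g (y j)|) / n with hAdef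
  have HA : A ≤ C + 1 := by
    rw [Real.dist_eq] at HAb
    have := abs_lt.mp HAb
    linarith [this.2]
  have hAnn : 0 ≤ A := by positivity
  have hterm : ∀ i ∈ Finset.range n,
      |gaussKer ε x (y i) * (g (y i) * d (y i)) /
          (∑ j ∈ Finset.range n, gaussKer ε (y i) (y j))
        - gaussKer ε x (y i) * g (y i) / n| ≤ |g (y i)| * ((2 * η / c) / n) := by
    intro i _
    set q : ℝ := ∑ j ∈ Finset.range n, gaussKer ε (y i) (y j) with hqdef
    have hq1 : |q / n - d (y i)| ≤ η := Hq (y i) (hy i)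
    have hqn : c / 2 ≤ q / n := by
      have h1 := hd (y i) (hy i)
      have h2 := abs_le.mp hq1
      linarith [h2.1]
    have hq2 : (c / 2) * n ≤ q := (le_div_iff₀ hNpos).mp hqn
    have hqpos : 0 < q := lt_of_lt_of_le (by positivity) hq2
    have hdiff : gaussKer ε x (y i) * (g (y i) * d (y i)) / q
        - gaussKer ε x (y i) * g (y i) / n
        = gaussKer ε x (y i) * g (y i) * (d (y i) / q - 1 / n) := by
      field_simp
    rw [hdiff, abs_mul]
    have h1 : |d (y i) / q - 1 / n| ≤ (2 * η / c) / n := by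
      have e : d (y i) / q - 1 / n = (d (y i) - q / n) / q := by
        rw [sub_div, div_right_comm, div_self hqpos.ne']
      rw [e, abs_div, abs_of_pos hqpos]
      have hnum : |d (y i) - q / n| ≤ η := by rw [abs_sub_comm]; exact hq1
      calc |d (y i) - q / n| / q ≤ η / ((c / 2) * n) :=
            div_le_div₀ hηpos.le hnum (by positivity) hq2
        _ = (2 * η / c) / n := by field_simp
    calc |gaussKer ε x (y i) * g (y i)| * |d (y i) / q - 1 / n|
        ≤ (1 * |g (y i)|) * ((2 * η / c) / n) := by
          apply mul_le_mul _ h1 (abs_nonneg _) (by positivity)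
          rw [abs_mul]
          apply mul_le_mul_of_nonneg_right _ (abs_nonneg _)
          rw [abs_of_pos (gaussKer_pos ε x (y i))]
          exact gaussKer_le_one ε x (y i)
      _ = |g (y i)| * ((2 * η / c) / n) := by ring
  have key : |(∑ i ∈ Finset.range n,
      gaussKer ε x (y i) * (g (y i) * d (y i)) /
        (∑ j ∈ Finset.range n, gaussKer ε (y i) (y j)))
      - (∑ j ∈ Finset.range n, gaussKer ε x (y j) * g (y j)) / n|
      ≤ (2 * η / c) * A := by
    rw [Finset.sum_div, ← Finset.sum_sub_distrib]
    refine (Finset.abs_sum_le_sum_abs _ _).trans ?_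
    calc ∑ i ∈ Finset.range n,
        |gaussKer ε x (y i) * (g (y i) * d (y i)) /
            (∑ j ∈ Finset.range n, gaussKer ε (y i) (y j))
          - gaussKer ε x (y i) * g (y i) / n|
        ≤ ∑ i ∈ Finset.range n, |g (y i)| * ((2 * η / c) / n) :=
          Finset.sum_le_sum hterm
      _ = (2 * η / c) * A := by
          rw [← Finset.sum_mul, hAdef]
          ring
  have HUx : |(∑ j ∈ Finset.range n, gaussKer ε x (y j) * g (y j)) / n - F x| ≤ η :=
    HU' x hx
  have htri := abs_sub_le
    (∑ i ∈ Finset.range n,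
      gaussKer ε x (y i) * (g (y i) * d (y i)) /
        (∑ j ∈ Finset.range n, gaussKer ε (y i) (y j)))
    ((∑ j ∈ Finset.range n, gaussKer ε x (y j) * g (y j)) / n) (F x)
  have hbd : (2 * η / c) * A ≤ (2 * η / c) * (C + 1) :=
    mul_le_mul_of_nonneg_left HA (by positivity)
  have hKeq : (2 * η / c) * (C + 1) + η = η * K := by
    rw [hK]; field_simp; ring
  linarith

lemma gaussKer_integrable (μ : Measure (EuclideanSpace ℝ (Fin D))) [IsProbabilityMeasure μ]
    (ε : ℝ) (x : EuclideanSpace ℝ (Fin D)) :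
    Integrable (fun y => gaussKer ε x y) μ := by
  apply (integrable_const (1:ℝ)).mono' (gaussKer_measurable ε x).aestronglyMeasurable
  filter_upwards with y
  rw [Real.norm_eq_abs, abs_of_pos (gaussKer_pos ε x y)]
  exact gaussKer_le_one ε x y

end Helpers

/-- Almost surely, the graph-Laplacian row averages
`Σ_{i=1}^N A^N_{k,i} f(X_i)` converge to `T_ε f(X_k)` as `N → ∞`, where the `X_i` are i.i.d.
samples from `P` and `f ∈ L²(S,P)`. -/
theorem stmt1 {D : ℕ} (S : Set (EuclideanSpace ℝ (Fin D))) (hS : IsCompact S)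
    (hSne : S.Nonempty) (μ : Measure (EuclideanSpace ℝ (Fin D))) [IsProbabilityMeasure μ]
    (hμS : μ Sᶜ = 0) (ε : ℝ) (hε : 0 < ε)
    {Ω : Type*} [MeasurableSpace Ω] (ℙ : Measure Ω) [IsProbabilityMeasure ℙ]
    (X : ℕ → Ω → EuclideanSpace ℝ (Fin D))
    (hXmeas : ∀ i, Measurable (X i))
    (hXdist : ∀ i, Measure.map (X i) ℙ = μ)
    (hXindep : ProbabilityTheory.iIndepFun X ℙ)
    (k : ℕ) (f : EuclideanSpace ℝ (Fin D) → ℝ) (hf : Measurable f)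
    (hf2 : Integrable (fun x => f x ^ 2) μ) :
    ∀ᵐ ω ∂ℙ, Filter.Tendsto
      (fun N => ∑ i ∈ Finset.range N,
        (gaussKer ε (X k ω) (X i ω) / (∑ j ∈ Finset.range N, gaussKer ε (X i ω) (X j ω))) /
          (∑ j ∈ Finset.range N,
            gaussKer ε (X k ω) (X j ω) / (∑ j' ∈ Finset.range N, gaussKer ε (X j ω) (X j' ω)))
          * f (X i ω))
      Filter.atTop (nhds (Tfun ε μ f (X k ω))) := by
  classical
  obtain ⟨r, hr⟩ := hS.isBounded.subset_closedBall 0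
  set M : ℝ := max r 1 with hMdef
  have hMpos : (0:ℝ) < M := lt_of_lt_of_le one_pos (le_max_right _ _)
  have hSM : S ⊆ Metric.closedBall 0 M :=
    hr.trans (Metric.closedBall_subset_closedBall (le_max_left _ _))
  have hnormM : ∀ z ∈ S, ‖z‖ ≤ M := fun z hz => by simpa using hSM hz
  set c : ℝ := Real.exp (-(2*M)^2/(4*ε^2)) with hcdef
  have hcpos : 0 < c := Real.exp_pos _
  have haeS : ∀ᵐ y ∂μ, y ∈ S := ae_mem_S μ hμS
  have hdcont : Continuous (degFun ε μ) := by
    apply continuous_of_dominated (bound := fun _ => (1:ℝ))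
    · intro x; exact (gaussKer_measurable ε x).aestronglyMeasurable
    · intro x
      filter_upwards with y
      rw [Real.norm_eq_abs, abs_of_pos (gaussKer_pos ε x y)]
      exact gaussKer_le_one ε x y
    · exact integrable_const 1
    · filter_upwards with y; unfold gaussKer; fun_prop
  have hdmeas : Measurable (degFun ε μ) := hdcont.measurable
  have hdle1 : ∀ z, degFun ε μ z ≤ 1 := by
    intro z
    have h := integral_mono (gaussKer_integrable μ ε z) (integrable_const 1)
      (fun y => gaussKer_le_one ε z y)
    simpa [degFun] using h
  have hdOnS : ∀ z ∈ S, c ≤ degFun ε μ z := by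
    intro z hz
    have hae : ∀ᵐ y ∂μ, c ≤ gaussKer ε z y := by
      filter_upwards [haeS] with y hy
      rw [hcdef]
      unfold gaussKer
      apply Real.exp_le_exp.mpr
      have h1 : ‖z - y‖ ≤ 2*M := by
        have h2 := norm_sub_le z y
        have h3 := hnormM z hz
        have h4 := hnormM y hy
        linarith
      have h2 : ‖z - y‖^2 ≤ (2*M)^2 := by nlinarith [norm_nonneg (z-y)]
      gcongr
    have h := integral_mono_ae (integrable_const c) (gaussKer_integrable μ ε z) hae
    simpa [degFun] using h
  have hdpos : ∀ z ∈ S, 0 < degFun ε μ z := fun z hz => lt_of_lt_of_le hcpos (hdOnS z hz)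
  have hfint : Integrable f μ := by
    apply ((integrable_const (1:ℝ)).add hf2).mono' hf.aestronglyMeasurable
    filter_upwards with z
    rw [Real.norm_eq_abs]
    simp only [Pi.add_apply]
    nlinarith [sq_nonneg (|f z| - 1), sq_abs (f z), abs_nonneg (f z)]
  have hg2m : Measurable (fun y => f y / degFun ε μ y) := hf.div hdmeas
  have hg2i : Integrable (fun y => f y / degFun ε μ y) μ := by
    apply (hfint.abs.mul_const c⁻¹).mono' hg2m.aestronglyMeasurable
    filter_upwards [haeS] with z hz
    rw [Real.norm_eq_abs, abs_div, abs_of_pos (hdpos z hz), div_eq_mul_inv]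
    apply mul_le_mul_of_nonneg_left _ (abs_nonneg _)
    exact inv_anti₀ hcpos (hdOnS z hz)
  have hg3m : Measurable (fun y => 1 / degFun ε μ y) := measurable_const.div hdmeas
  have hg3i : Integrable (fun y => 1 / degFun ε μ y) μ := by
    apply (integrable_const c⁻¹).mono' hg3m.aestronglyMeasurable
    filter_upwards [haeS] with z hz
    rw [Real.norm_eq_abs, abs_div, abs_one, abs_of_pos (hdpos z hz), one_div]
    exact inv_anti₀ hcpos (hdOnS z hz)
  have U1 := ulln μ hS hμS hε hMpos hSM ℙ X hXmeas hXdist hXindep (fun _ => (1:ℝ))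
    measurable_const (integrable_const 1)
  have U2 := ulln μ hS hμS hε hMpos hSM ℙ X hXmeas hXdist hXindep _ hg2m hg2i
  have U3 := ulln μ hS hμS hε hMpos hSM ℙ X hXmeas hXdist hXindep _ hg3m hg3i
  have A2 := slln_comp μ ℙ X hXmeas hXdist hXindep (fun y => |f y / degFun ε μ y|)
    hg2m.abs hg2i.abs
  have A3 := slln_comp μ ℙ X hXmeas hXdist hXindep (fun y => |1 / degFun ε μ y|)
    hg3m.abs hg3i.abs
  have hSae : ∀ᵐ ω ∂ℙ, ∀ i, X i ω ∈ S := by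
    rw [ae_all_iff]
    intro i
    have hmeasS : MeasurableSet Sᶜ := hS.isClosed.measurableSet.compl
    have h0 : ℙ (X i ⁻¹' Sᶜ) = 0 := by
      rw [← Measure.map_apply (hXmeas i) hmeasS, hXdist i]; exact hμS
    simpa [ae_iff, Set.preimage, Set.compl_def] using h0
  filter_upwards [U1, U2, U3, A2, A3, hSae] with ω h1 h2 h3 hA2 hA3 hSω
  have hx : X k ω ∈ S := hSω k
  have hq : ∀ η : ℝ, 0 < η → ∀ᶠ N : ℕ in Filter.atTop, ∀ z ∈ S,
      |(∑ j ∈ Finset.range N, gaussKer ε z (X j ω)) / N - degFun ε μ z| ≤ η := by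
    intro η hη
    filter_upwards [h1 η hη] with N hN
    intro z hz
    have h5 := hN z hz
    simpa [degFun] using h5
  have hnum0 := det_tendsto (S := S) (ε := ε) hcpos (degFun ε μ)
      (fun z => ∫ y, gaussKer ε z y * (f y / degFun ε μ y) ∂μ) hdOnS
      (fun i => X i ω) hSω (X k ω) hx (fun y => f y / degFun ε μ y)
      (∫ y, |f y / degFun ε μ y| ∂μ) hq h2 hA2
  have hden0 := det_tendsto (S := S) (ε := ε) hcpos (degFun ε μ)
      (fun z => ∫ y, gaussKer ε z y * (1 / degFun ε μ y) ∂μ) hdOnS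
      (fun i => X i ω) hSω (X k ω) hx (fun y => 1 / degFun ε μ y)
      (∫ y, |1 / degFun ε μ y| ∂μ) hq h3 hA3
  have hnum : Filter.Tendsto (fun N => ∑ i ∈ Finset.range N,
      gaussKer ε (X k ω) (X i ω) * f (X i ω) /
        (∑ j ∈ Finset.range N, gaussKer ε (X i ω) (X j ω))) Filter.atTop
      (nhds (∫ y, gaussKer ε (X k ω) y * (f y / degFun ε μ y) ∂μ)) := by
    refine hnum0.congr fun N => Finset.sum_congr rfl fun i _ => ?_
    have h5 : f (X i ω) / degFun ε μ (X i ω) * degFun ε μ (X i ω) = f (X i ω) := by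
      field_simp [(hdpos _ (hSω i)).ne']
    simp only [h5]
  have hden : Filter.Tendsto (fun N => ∑ i ∈ Finset.range N,
      gaussKer ε (X k ω) (X i ω) /
        (∑ j ∈ Finset.range N, gaussKer ε (X i ω) (X j ω))) Filter.atTop
      (nhds (∫ y, gaussKer ε (X k ω) y * (1 / degFun ε μ y) ∂μ)) := by
    refine hden0.congr fun N => Finset.sum_congr rfl fun i _ => ?_
    have h5 : (1 / degFun ε μ (X i ω)) * degFun ε μ (X i ω) = 1 :=
      one_div_mul_cancel (hdpos _ (hSω i)).ne'
    simp only [h5, mul_one]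
  have hF3ge : degFun ε μ (X k ω) ≤ ∫ y, gaussKer ε (X k ω) y * (1 / degFun ε μ y) ∂μ := by
    have hint3 : Integrable (fun y => gaussKer ε (X k ω) y * (1 / degFun ε μ y)) μ :=
      integrable_ker_mul μ ε _ hg3m hg3i
    have hae : ∀ᵐ y ∂μ, gaussKer ε (X k ω) y
        ≤ gaussKer ε (X k ω) y * (1 / degFun ε μ y) := by
      filter_upwards [haeS] with y hy
      have h6 : 1 ≤ 1 / degFun ε μ y := by
        rw [le_div_iff₀ (hdpos y hy)]; simpa using hdle1 y
      nlinarith [gaussKer_pos ε (X k ω) y]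
    have h7 := integral_mono_ae (gaussKer_integrable μ ε _) hint3 hae
    simpa [degFun] using h7
  have hF3pos : 0 < ∫ y, gaussKer ε (X k ω) y * (1 / degFun ε μ y) ∂μ :=
    lt_of_lt_of_le (hdpos _ hx) hF3ge
  have hdx := hdpos _ hx
  have hQf : ∫ y, Qker ε μ (X k ω) y * f y ∂μ
      = (∫ y, gaussKer ε (X k ω) y * (f y / degFun ε μ y) ∂μ) / degFun ε μ (X k ω) := by
    rw [← integral_div]
    apply integral_congr_ae
    filter_upwards [haeS] with y hy
    have hdy := hdpos y hy
    unfold Qker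
    field_simp
  have hQ1 : mFun ε μ (X k ω)
      = (∫ y, gaussKer ε (X k ω) y * (1 / degFun ε μ y) ∂μ) / degFun ε μ (X k ω) := by
    unfold mFun
    rw [← integral_div]
    apply integral_congr_ae
    filter_upwards [haeS] with y hy
    have hdy := hdpos y hy
    unfold Qker
    field_simp
  have hT : Tfun ε μ f (X k ω)
      = (∫ y, gaussKer ε (X k ω) y * (f y / degFun ε μ y) ∂μ)
        / ∫ y, gaussKer ε (X k ω) y * (1 / degFun ε μ y) ∂μ := by
    unfold Tfun
    rw [hQf, hQ1, div_div_div_comm, div_self hdx.ne', div_one]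
  rw [hT]
  have hgoal : ∀ N : ℕ, (∑ i ∈ Finset.range N,
        (gaussKer ε (X k ω) (X i ω) / (∑ j ∈ Finset.range N, gaussKer ε (X i ω) (X j ω))) /
          (∑ j ∈ Finset.range N,
            gaussKer ε (X k ω) (X j ω) / (∑ j' ∈ Finset.range N, gaussKer ε (X j ω) (X j' ω)))
          * f (X i ω))
      = (∑ i ∈ Finset.range N, gaussKer ε (X k ω) (X i ω) * f (X i ω) /
          (∑ j ∈ Finset.range N, gaussKer ε (X i ω) (X j ω)))
        / (∑ j ∈ Finset.range N,
            gaussKer ε (X k ω) (X j ω) / (∑ j' ∈ Finset.range N, gaussKer ε (X j ω) (X j' ω))) := by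
    intro N
    rw [Finset.sum_div]
    apply Finset.sum_congr rfl
    intro i _
    ring
  have hfinal := hnum.div hden hF3pos.ne'
  exact hfinal.congr fun N => (hgoal N).symm
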